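/- Suen's inequality: Let (Ω, μ) be a probability space, I a finite index set, and for each i ∈ I let θ_i : Ω → {0,1} be a measurable indicator random variable with P(θ_i = 1) = p_i. Let L be a dependency graph on I, i.e. a simple graph on vertex set I such that for any two disjoint subsets A, B ⊆ I with no edge of L between A and B, the families (θ_i)_{i∈A} and (θ_j)_{j∈B} are independent. Write i ∼ j if ij is an edge of L, let X = Σ_{i∈I} θ_i, m = E(X) = Σ_{i∈I} p_i, Δ = (1/2) Σ_{i∼j} E(θ_i θ_j), and δ = max_{i∈I} Σ_{j : j∼i} p_j. If Δ > 0 and δ > 0, then P(X = 0) ≤ exp( − min{ m²/(8Δ), m/2, m/(6δ) } ). -/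

import Mathlib

open MeasureTheory ProbabilityTheory

set_option linter.unusedSectionVars false
set_option linter.unnecessarySeqFocus false

namespace SuenProof

open Finset

variable {Ω : Type*} [MeasurableSpace Ω] {I : Type*} [DecidableEq I]

/-- Product of indicators over `M`. -/
def Tf (θ : I → Ω → ℝ) (M : Finset I) (x : Ω) : ℝ := ∏ i ∈ M, θ i x

/-- Product of `(1 - a θ_i)` over `V`. -/
def Pf (θ : I → Ω → ℝ) (a : ℝ) (V : Finset I) (x : Ω) : ℝ := ∏ i ∈ V, (1 - a * θ i x)

section Basic

variable {μ : Measure Ω} [IsProbabilityMeasure μ] {θ : I → Ω → ℝ}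

lemma θnn (hθ01 : ∀ i x, θ i x = 0 ∨ θ i x = 1) (i : I) (x : Ω) : 0 ≤ θ i x := by
  rcases hθ01 i x with h | h <;> rw [h] <;> norm_num

lemma θle1 (hθ01 : ∀ i x, θ i x = 0 ∨ θ i x = 1) (i : I) (x : Ω) : θ i x ≤ 1 := by
  rcases hθ01 i x with h | h <;> rw [h] <;> norm_num

lemma θsq (hθ01 : ∀ i x, θ i x = 0 ∨ θ i x = 1) (i : I) (x : Ω) :
    θ i x * θ i x = θ i x := by
  rcases hθ01 i x with h | h <;> rw [h] <;> norm_num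

lemma Tf_meas (hθmeas : ∀ i, Measurable (θ i)) (M : Finset I) : Measurable (Tf θ M) :=
  Finset.measurable_prod M fun i _ => hθmeas i

lemma Pf_meas (hθmeas : ∀ i, Measurable (θ i)) (a : ℝ) (V : Finset I) :
    Measurable (Pf θ a V) :=
  Finset.measurable_prod V fun i _ =>
    (measurable_const.sub ((hθmeas i).const_mul a))

lemma Tf_nonneg (hθ01 : ∀ i x, θ i x = 0 ∨ θ i x = 1) (M : Finset I) (x : Ω) :
    0 ≤ Tf θ M x :=
  Finset.prod_nonneg fun i _ => θnn hθ01 i x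

lemma Tf_le_one (hθ01 : ∀ i x, θ i x = 0 ∨ θ i x = 1) (M : Finset I) (x : Ω) :
    Tf θ M x ≤ 1 :=
  Finset.prod_le_one (fun i _ => θnn hθ01 i x) (fun i _ => θle1 hθ01 i x)

lemma Pf_nonneg (hθ01 : ∀ i x, θ i x = 0 ∨ θ i x = 1) {a : ℝ} (ha1 : a ≤ 1)
    (V : Finset I) (x : Ω) : 0 ≤ Pf θ a V x :=
  Finset.prod_nonneg fun i _ => by
    have h1 := θle1 hθ01 i x
    have h0 := θnn hθ01 i x
    nlinarith

lemma Pf_le_one (hθ01 : ∀ i x, θ i x = 0 ∨ θ i x = 1) {a : ℝ} (ha0 : 0 ≤ a) (ha1 : a ≤ 1)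
    (V : Finset I) (x : Ω) : Pf θ a V x ≤ 1 :=
  Finset.prod_le_one
    (fun i _ => by have h1 := θle1 hθ01 i x; have h0 := θnn hθ01 i x; nlinarith)
    (fun i _ => by have h0 := θnn hθ01 i x; nlinarith)

/-- monotonicity in the index set. -/
lemma Pf_mono (hθ01 : ∀ i x, θ i x = 0 ∨ θ i x = 1) {a : ℝ} (ha0 : 0 ≤ a) (ha1 : a ≤ 1)
    {V W : Finset I} (hVW : V ⊆ W) (x : Ω) :
    Pf θ a W x ≤ Pf θ a V x := by
  have : Pf θ a W x = Pf θ a V x * Pf θ a (W \ V) x := by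
    rw [Pf, Pf, Pf, ← Finset.prod_union (Finset.disjoint_sdiff)]
    congr 1
    exact (Finset.union_sdiff_of_subset hVW).symm
  rw [this]
  have h1 : Pf θ a (W \ V) x ≤ 1 := Pf_le_one hθ01 ha0 ha1 _ x
  have h0 : 0 ≤ Pf θ a V x := Pf_nonneg hθ01 ha1 _ x
  nlinarith [Pf_nonneg hθ01 ha1 (W \ V) x]

lemma integrable_TP (hθmeas : ∀ i, Measurable (θ i)) (hθ01 : ∀ i x, θ i x = 0 ∨ θ i x = 1)
    (a : ℝ) (M V : Finset I) :
    Integrable (fun x => Tf θ M x * Pf θ a V x) μ := by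
  refine Integrable.mono' (integrable_const ((1 + |a|) ^ V.card)) ?_ ?_
  · exact ((Tf_meas hθmeas M).mul (Pf_meas hθmeas a V)).aestronglyMeasurable
  · refine Filter.Eventually.of_forall fun x => ?_
    have hT : |Tf θ M x| ≤ 1 := by
      rw [abs_le]; exact ⟨by linarith [Tf_nonneg hθ01 M x], Tf_le_one hθ01 M x⟩
    have hP : |Pf θ a V x| ≤ (1 + |a|) ^ V.card := by
      rw [Pf, Finset.abs_prod]
      calc ∏ i ∈ V, |1 - a * θ i x| ≤ ∏ _i ∈ V, (1 + |a|) := by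
            refine Finset.prod_le_prod (fun i _ => abs_nonneg _) fun i _ => ?_
            have h0 := θnn hθ01 i x
            have h1 := θle1 hθ01 i x
            have : |a * θ i x| ≤ |a| := by
              rw [abs_mul]
              calc |a| * |θ i x| ≤ |a| * 1 := by
                    refine mul_le_mul_of_nonneg_left ?_ (abs_nonneg a)
                    rw [abs_le]; constructor <;> linarith
                _ = |a| := mul_one _
            calc |1 - a * θ i x| ≤ |1| + |a * θ i x| := abs_sub _ _
              _ ≤ 1 + |a| := by rw [abs_one]; linarith
        _ = (1 + |a|) ^ V.card := Finset.prod_const _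
    calc ‖Tf θ M x * Pf θ a V x‖ = |Tf θ M x| * |Pf θ a V x| := abs_mul _ _
      _ ≤ 1 * ((1 + |a|) ^ V.card) := by
          refine mul_le_mul hT hP (abs_nonneg _) zero_le_one
      _ = (1 + |a|) ^ V.card := one_mul _

lemma integrable_P (hθmeas : ∀ i, Measurable (θ i)) (hθ01 : ∀ i x, θ i x = 0 ∨ θ i x = 1)
    (a : ℝ) (V : Finset I) : Integrable (Pf θ a V) μ := by
  have := integrable_TP (μ := μ) hθmeas hθ01 a ∅ V
  simpa [Tf] using this

lemma integral_theta {p : I → ℝ} (hθmeas : ∀ i, Measurable (θ i))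
    (hθ01 : ∀ i x, θ i x = 0 ∨ θ i x = 1)
    (hp : ∀ i, p i = (μ {x | θ i x = 1}).toReal) (i : I) :
    ∫ x, θ i x ∂μ = p i := by
  have hset : MeasurableSet {x | θ i x = 1} := (hθmeas i) (measurableSet_singleton 1)
  have hind : θ i = Set.indicator {x | θ i x = 1} (1 : Ω → ℝ) := by
    funext x
    rcases hθ01 i x with h | h
    · have hx : x ∉ {x | θ i x = 1} := by simp [Set.mem_setOf_eq, h]
      simp [Set.indicator_apply, hx, h]
    · have hx : x ∈ {x | θ i x = 1} := by simp [Set.mem_setOf_eq, h]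
      simp [Set.indicator_apply, hx, h]
  rw [hp i, ← measureReal_def, ← integral_indicator_one hset]
  congr 1

lemma indep_TP (hθmeas : ∀ i, Measurable (θ i))
    (L : SimpleGraph I) [DecidableRel L.Adj]
    (hdep : ∀ A B : Finset I, Disjoint A B → (∀ i ∈ A, ∀ j ∈ B, ¬ L.Adj i j) →
      IndepFun (fun x => fun i : A => θ i x) (fun x => fun j : B => θ j x) μ)
    (M V : Finset I) (hMV : Disjoint M V)
    (hadj : ∀ i ∈ M, ∀ j ∈ V, ¬ L.Adj i j) (a : ℝ) :
    ∫ x, Tf θ M x * Pf θ a V x ∂μ = (∫ x, Tf θ M x ∂μ) * ∫ x, Pf θ a V x ∂μ := by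
  have h := hdep M V hMV hadj
  set F : (M → ℝ) → ℝ := fun y => ∏ i : M, y i with hF
  set G : (V → ℝ) → ℝ := fun y => ∏ j : V, (1 - a * y j) with hG
  have hFm : Measurable F :=
    Finset.measurable_prod Finset.univ (fun i _ => measurable_pi_apply i)
  have hGm : Measurable G :=
    Finset.measurable_prod Finset.univ
      (fun j _ => measurable_const.sub (by fun_prop))
  have h2 := h.comp hFm hGm
  have hTf : (F ∘ fun x => fun i : M => θ i x) = Tf θ M := by
    funext x
    simp only [Function.comp, hF, Tf]
    exact Finset.prod_coe_sort M (fun i => θ i x)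
  have hPf : (G ∘ fun x => fun j : V => θ j x) = Pf θ a V := by
    funext x
    simp only [Function.comp, hG, Pf]
    exact Finset.prod_coe_sort V (fun j => 1 - a * θ j x)
  rw [hTf, hPf] at h2
  have h3 := h2.integral_mul_eq_mul_integral (Tf_meas hθmeas M).aestronglyMeasurable
    (Pf_meas hθmeas a V).aestronglyMeasurable
  simpa using h3

lemma sumθ_nonneg (hθ01 : ∀ i x, θ i x = 0 ∨ θ i x = 1) (W : Finset I) (x : Ω) :
    0 ≤ ∑ k ∈ W, θ k x :=
  Finset.sum_nonneg fun k _ => θnn hθ01 k x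

/-- Weierstrass product inequality. -/
lemma one_sub_sum_le_Pf (hθ01 : ∀ i x, θ i x = 0 ∨ θ i x = 1) {a : ℝ}
    (ha0 : 0 ≤ a) (ha1 : a ≤ 1) (W : Finset I) (x : Ω) :
    1 - a * ∑ k ∈ W, θ k x ≤ Pf θ a W x := by
  induction W using Finset.induction_on with
  | empty => simp [Pf]
  | @insert k s hk ih =>
    rw [Finset.sum_insert hk]
    simp only [Pf]
    rw [Finset.prod_insert hk]
    have hPs : 1 - a * ∑ k ∈ s, θ k x ≤ Pf θ a s x := ih
    have hc : 0 ≤ 1 - a * θ k x := by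
      have h0 := θnn hθ01 k x; have h1 := θle1 hθ01 k x; nlinarith
    have hs0 := sumθ_nonneg hθ01 s x
    have h0 := θnn hθ01 k x
    have hmul := mul_le_mul_of_nonneg_left hPs hc
    simp only [Pf] at hmul ⊢
    nlinarith [mul_nonneg (mul_nonneg (mul_nonneg ha0 ha0) h0) hs0]

lemma Tf_insert (hθ01 : ∀ i x, θ i x = 0 ∨ θ i x = 1) (k : I) (M : Finset I) (x : Ω) :
    Tf θ (insert k M) x = θ k x * Tf θ M x := by
  by_cases hkM : k ∈ M
  · rw [Finset.insert_eq_self.mpr hkM]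
    have h2 : ∏ i ∈ M, θ i x = θ k x * ∏ i ∈ M.erase k, θ i x :=
      (Finset.mul_prod_erase M _ hkM).symm
    simp only [Tf, h2, ← mul_assoc, θsq hθ01]
  · rw [Tf, Finset.prod_insert hkM]; rfl

lemma expand_TP (hθmeas : ∀ i, Measurable (θ i)) (hθ01 : ∀ i x, θ i x = 0 ∨ θ i x = 1)
    (M s : Finset I) {k : I} (hk : k ∉ s) (b : ℝ) :
    ∫ x, Tf θ M x * Pf θ b (insert k s) x ∂μ
      = (∫ x, Tf θ M x * Pf θ b s x ∂μ) - b * ∫ x, Tf θ (insert k M) x * Pf θ b s x ∂μ := by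
  have h1 : ∀ x, Tf θ M x * Pf θ b (insert k s) x
      = Tf θ M x * Pf θ b s x - b * (Tf θ (insert k M) x * Pf θ b s x) := by
    intro x
    simp only [Pf, Finset.prod_insert hk, Tf_insert hθ01 k M x]
    ring
  calc ∫ x, Tf θ M x * Pf θ b (insert k s) x ∂μ
      = ∫ x, (Tf θ M x * Pf θ b s x - b * (Tf θ (insert k M) x * Pf θ b s x)) ∂μ := by
        congr 1; funext x; exact h1 x
    _ = (∫ x, Tf θ M x * Pf θ b s x ∂μ)
          - ∫ x, b * (Tf θ (insert k M) x * Pf θ b s x) ∂μ :=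
        integral_sub (integrable_TP hθmeas hθ01 b M s)
          ((integrable_TP hθmeas hθ01 b (insert k M) s).const_mul b)
    _ = _ := by rw [integral_const_mul]

lemma hasDeriv_TP (hθmeas : ∀ i, Measurable (θ i)) (hθ01 : ∀ i x, θ i x = 0 ∨ θ i x = 1)
    (V : Finset I) (M : Finset I) (a : ℝ) :
    HasDerivAt (fun b => ∫ x, Tf θ M x * Pf θ b V x ∂μ)
      (- ∑ i ∈ V, ∫ x, Tf θ (insert i M) x * Pf θ a (V.erase i) x ∂μ) a := by
  induction V using Finset.induction_on generalizing M with
  | empty =>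
    have hfun : (fun b : ℝ => ∫ x, Tf θ M x * Pf θ b ∅ x ∂μ)
        = fun _ : ℝ => ∫ x, Tf θ M x ∂μ := by
      funext b; simp [Pf]
    rw [hfun]
    simpa using hasDerivAt_const a (∫ x, Tf θ M x ∂μ)
  | @insert k s hk ih =>
    have key : (fun b : ℝ => ∫ x, Tf θ M x * Pf θ b (insert k s) x ∂μ)
        = fun b : ℝ => (∫ x, Tf θ M x * Pf θ b s x ∂μ)
            - b * ∫ x, Tf θ (insert k M) x * Pf θ b s x ∂μ := by
      funext b; exact expand_TP hθmeas hθ01 M s hk b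
    rw [key]
    have hd1 := ih M
    have hd2 := ih (insert k M)
    have hd := hd1.sub ((hasDerivAt_id a).mul hd2)
    refine hd.congr_deriv ?_
    have herase : ∀ i ∈ s, (insert k s).erase i = insert k (s.erase i) := by
      intro i hi
      have hne : k ≠ i := fun h => hk (h ▸ hi)
      exact Finset.erase_insert_of_ne hne
    have hterm : ∀ i ∈ s, ∫ x, Tf θ (insert i M) x * Pf θ a ((insert k s).erase i) x ∂μ
        = (∫ x, Tf θ (insert i M) x * Pf θ a (s.erase i) x ∂μ)
          - a * ∫ x, Tf θ (insert i (insert k M)) x * Pf θ a (s.erase i) x ∂μ := by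
      intro i hi
      rw [herase i hi, expand_TP hθmeas hθ01 (insert i M) (s.erase i)
        (fun hmem => hk (Finset.mem_of_mem_erase hmem)) a, Finset.insert_comm]
    rw [Finset.sum_insert hk, Finset.erase_insert hk, Finset.sum_congr rfl hterm,
      Finset.sum_sub_distrib, ← Finset.mul_sum]
    simp only [id_eq]
    ring

lemma ratio_lemma [Fintype I] [Nonempty I] (hθmeas : ∀ i, Measurable (θ i))
    (hθ01 : ∀ i x, θ i x = 0 ∨ θ i x = 1)
    (L : SimpleGraph I) [DecidableRel L.Adj]
    (hdep : ∀ A B : Finset I, Disjoint A B → (∀ i ∈ A, ∀ j ∈ B, ¬ L.Adj i j) →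
      IndepFun (fun x => fun i : A => θ i x) (fun x => fun j : B => θ j x) μ)
    {p : I → ℝ} (hp : ∀ i, p i = (μ {x | θ i x = 1}).toReal)
    {δ q a : ℝ} (hδnb : ∀ k, ∑ j ∈ L.neighborFinset k, p j ≤ δ)
    (hq0 : 0 < q) (hq1 : q ≤ 1) (hqδ : q * δ ≤ 1/4)
    (ha0 : 0 ≤ a) (haq : a ≤ q)
    (V W : Finset I) (hVW : Disjoint V W) (hWp : ∑ k ∈ W, p k ≤ δ) :
    ∫ x, Pf θ a V x ∂μ
      ≤ (2 / (1 + Real.sqrt (1 - a/q))) * ∫ x, Pf θ a (V ∪ W) x ∂μ := by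
  have hp0 : ∀ j, 0 ≤ p j := fun j => (hp j) ▸ ENNReal.toReal_nonneg
  have ha1 : a ≤ 1 := le_trans haq hq1
  have hδ0 : 0 ≤ δ :=
    le_trans (Finset.sum_nonneg fun j _ => hp0 j) (hδnb (Classical.arbitrary I))
  set u : ℝ := Real.sqrt (1 - a/q) with hu
  have haq' : a / q ≤ 1 := (div_le_one hq0).mpr haq
  have h1aq : 0 ≤ 1 - a/q := by linarith
  have hu0 : 0 ≤ u := Real.sqrt_nonneg _
  have hu1 : u ≤ 1 := Real.sqrt_le_one.mpr (by linarith [div_nonneg ha0 hq0.le])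
  have husq : u ^ 2 = 1 - a / q := Real.sq_sqrt h1aq
  have hae : a = q * (1 - u ^ 2) := by
    rw [husq]; field_simp; ring
  set r : ℝ := 2 / (1 + u) with hr
  have hr0 : 0 < r := by positivity
  have hr1 : 1 ≤ r := by
    rw [hr, le_div_iff₀ (by linarith)]; linarith
  have hrinv : 1 - a * δ * r ≥ 1 / r := by
    have h1 : a * δ ≤ (1 - u ^ 2) / 4 := by
      calc a * δ = q * δ * (1 - u ^ 2) := by rw [hae]; ring
        _ ≤ (1/4) * (1 - u ^ 2) := by nlinarith
        _ = (1 - u ^ 2) / 4 := by ring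
    have h2 : a * δ * r ≤ (1 - u) / 2 := by
      have : (1 - u ^ 2) / 4 * r = (1 - u) / 2 := by
        rw [hr]; field_simp; ring
      calc a * δ * r ≤ (1 - u ^ 2) / 4 * r := by
            exact mul_le_mul_of_nonneg_right h1 (le_of_lt hr0)
        _ = (1 - u) / 2 := this
    have h3 : (1:ℝ) / r = (1 + u) / 2 := by
      rw [hr]; field_simp
    rw [h3]; linarith
  -- main induction
  have main : ∀ n : ℕ, ∀ V W : Finset I, Disjoint V W → (∑ k ∈ W, p k ≤ δ) →
      (V ∪ W).card ≤ n →
      ∫ x, Pf θ a V x ∂μ ≤ r * ∫ x, Pf θ a (V ∪ W) x ∂μ := by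
    intro n
    induction n with
    | zero =>
      intro V W _ _ hcard
      have : V ∪ W = ∅ := Finset.card_eq_zero.mp (Nat.le_zero.mp hcard)
      have hV : V = ∅ := by
        have := Finset.union_eq_empty.mp this; exact this.1
      have hW : W = ∅ := by
        have := Finset.union_eq_empty.mp this; exact this.2
      subst hV; subst hW
      have hB0 : 0 ≤ ∫ x, Pf θ a (∅ ∪ (∅ : Finset I)) x ∂μ :=
        integral_nonneg fun x => Pf_nonneg hθ01 ha1 _ x
      simp only [Finset.union_empty] at hB0 ⊢
      nlinarith
    | succ n ihn =>
      intro V W hVW hWp hcard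
      rcases W.eq_empty_or_nonempty with hWe | hWne
      · subst hWe
        have hB0 : 0 ≤ ∫ x, Pf θ a (V ∪ (∅ : Finset I)) x ∂μ :=
          integral_nonneg fun x => Pf_nonneg hθ01 ha1 _ x
        simp only [Finset.union_empty] at hB0 ⊢
        nlinarith
      · set A := ∫ x, Pf θ a V x ∂μ with hA
        set B := ∫ x, Pf θ a (V ∪ W) x ∂μ with hB
        have hA0 : 0 ≤ A := integral_nonneg fun x => Pf_nonneg hθ01 ha1 _ x
        have hB0 : 0 ≤ B := integral_nonneg fun x => Pf_nonneg hθ01 ha1 _ x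
        -- the inner ratio estimate for each k ∈ W
        have hVcard : V.card ≤ n := by
          have h1 : V ⊂ V ∪ W := by
            obtain ⟨k, hk⟩ := hWne
            refine Finset.ssubset_iff_of_subset Finset.subset_union_left |>.mpr ?_
            exact ⟨k, Finset.mem_union_right V hk, fun hkV => (Finset.disjoint_left.mp hVW) hkV hk⟩
          have := Finset.card_lt_card h1
          omega
        have hinner : ∀ k ∈ W, ∫ x, θ k x * Pf θ a V x ∂μ ≤ p k * (r * A) := by
          intro k hk
          have hkV : k ∉ V := fun hkV => (Finset.disjoint_left.mp hVW) hkV hk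
          set N := L.neighborFinset k with hN
          have step1 : ∫ x, θ k x * Pf θ a V x ∂μ ≤ ∫ x, θ k x * Pf θ a (V \ N) x ∂μ := by
            refine integral_mono ?_ ?_ ?_
            · have := integrable_TP (μ := μ) hθmeas hθ01 a {k} V
              simpa [Tf] using this
            · have := integrable_TP (μ := μ) hθmeas hθ01 a {k} (V \ N)
              simpa [Tf] using this
            · intro x
              exact mul_le_mul_of_nonneg_left
                (Pf_mono hθ01 ha0 ha1 (Finset.sdiff_subset) x) (θnn hθ01 k x)
          have step2 : ∫ x, θ k x * Pf θ a (V \ N) x ∂μ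
              = p k * ∫ x, Pf θ a (V \ N) x ∂μ := by
            have hdisj : Disjoint ({k} : Finset I) (V \ N) := by
              simp only [Finset.disjoint_singleton_left, Finset.mem_sdiff]
              exact fun h => hkV h.1
            have hadj : ∀ i ∈ ({k} : Finset I), ∀ j ∈ V \ N, ¬ L.Adj i j := by
              intro i hi j hj
              rw [Finset.mem_singleton] at hi
              subst hi
              rcases Finset.mem_sdiff.mp hj with ⟨_, hjN⟩
              exact fun hadj => hjN (by rw [hN, SimpleGraph.mem_neighborFinset]; exact hadj)
            have := indep_TP hθmeas L hdep {k} (V \ N) hdisj hadj a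
            have hTf1 : ∀ x, Tf θ {k} x = θ k x := by intro x; simp [Tf]
            simp only [hTf1] at this
            rw [this, integral_theta hθmeas hθ01 hp k]
          have step3 : ∫ x, Pf θ a (V \ N) x ∂μ ≤ r * A := by
            have hsplit : (V \ N) ∪ (V ∩ N) = V := by
              ext j; simp only [Finset.mem_union, Finset.mem_sdiff, Finset.mem_inter]
              tauto
            have hdisj2 : Disjoint (V \ N) (V ∩ N) := by
              rw [Finset.disjoint_left]
              intro j hj hj2
              exact (Finset.mem_sdiff.mp hj).2 (Finset.mem_inter.mp hj2).2
            have hmass : ∑ j ∈ V ∩ N, p j ≤ δ := by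
              refine le_trans ?_ (hδnb k)
              exact Finset.sum_le_sum_of_subset_of_nonneg
                (Finset.inter_subset_right) (fun j _ _ => hp0 j)
            have hcard2 : ((V \ N) ∪ (V ∩ N)).card ≤ n := by rw [hsplit]; exact hVcard
            have := ihn (V \ N) (V ∩ N) hdisj2 hmass hcard2
            rw [hsplit] at this
            exact this
          calc ∫ x, θ k x * Pf θ a V x ∂μ ≤ ∫ x, θ k x * Pf θ a (V \ N) x ∂μ := step1
            _ = p k * ∫ x, Pf θ a (V \ N) x ∂μ := step2
            _ ≤ p k * (r * A) := mul_le_mul_of_nonneg_left step3 (hp0 k)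
        -- Step 1 : A - B ≤ a * ∑_{k ∈ W} ∫ θ_k Pf V
        have hstep : A - B ≤ a * ∑ k ∈ W, ∫ x, θ k x * Pf θ a V x ∂μ := by
          have hptwise : ∀ x, Pf θ a V x - Pf θ a (V ∪ W) x
              ≤ ∑ k ∈ W, a * (θ k x * Pf θ a V x) := by
            intro x
            have hPU : Pf θ a (V ∪ W) x = Pf θ a V x * Pf θ a W x := by
              simp only [Pf]; rw [Finset.prod_union hVW]
            have hW1 : 1 - a * ∑ k ∈ W, θ k x ≤ Pf θ a W x :=
              one_sub_sum_le_Pf hθ01 ha0 ha1 W x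
            have hPV0 : 0 ≤ Pf θ a V x := Pf_nonneg hθ01 ha1 _ x
            have : Pf θ a V x - Pf θ a (V ∪ W) x
                ≤ Pf θ a V x * (a * ∑ k ∈ W, θ k x) := by
              rw [hPU]; nlinarith
            calc Pf θ a V x - Pf θ a (V ∪ W) x ≤ Pf θ a V x * (a * ∑ k ∈ W, θ k x) := this
              _ = ∑ k ∈ W, a * (θ k x * Pf θ a V x) := by
                  simp only [Finset.mul_sum]
                  exact Finset.sum_congr rfl fun k _ => by ring
          have hint : ∫ x, (Pf θ a V x - Pf θ a (V ∪ W) x) ∂μ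
              ≤ ∫ x, (∑ k ∈ W, a * (θ k x * Pf θ a V x)) ∂μ := by
            refine integral_mono ?_ ?_ hptwise
            · exact (integrable_P hθmeas hθ01 a V).sub (integrable_P hθmeas hθ01 a (V ∪ W))
            · refine integrable_finset_sum W fun k _ => ?_
              have := integrable_TP (μ := μ) hθmeas hθ01 a {k} V
              have h2 : Integrable (fun x => θ k x * Pf θ a V x) μ := by simpa [Tf] using this
              exact h2.const_mul a
          rw [integral_sub (integrable_P hθmeas hθ01 a V)
            (integrable_P hθmeas hθ01 a (V ∪ W))] at hint
          rw [integral_finset_sum W (fun k _ => by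
            have := integrable_TP (μ := μ) hθmeas hθ01 a {k} V
            have h2 : Integrable (fun x => θ k x * Pf θ a V x) μ := by simpa [Tf] using this
            exact h2.const_mul a)] at hint
          calc A - B ≤ ∑ k ∈ W, ∫ x, a * (θ k x * Pf θ a V x) ∂μ := hint
            _ = a * ∑ k ∈ W, ∫ x, θ k x * Pf θ a V x ∂μ := by
                rw [Finset.mul_sum]
                exact Finset.sum_congr rfl fun k _ => integral_const_mul a _
        -- combine
        have hsum : ∑ k ∈ W, ∫ x, θ k x * Pf θ a V x ∂μ ≤ δ * (r * A) := by
          calc ∑ k ∈ W, ∫ x, θ k x * Pf θ a V x ∂μ ≤ ∑ k ∈ W, p k * (r * A) :=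
              Finset.sum_le_sum hinner
            _ = (∑ k ∈ W, p k) * (r * A) := by rw [Finset.sum_mul]
            _ ≤ δ * (r * A) := by
                refine mul_le_mul_of_nonneg_right hWp ?_
                positivity
        have hfin : A - B ≤ a * δ * r * A := by
          calc A - B ≤ a * ∑ k ∈ W, ∫ x, θ k x * Pf θ a V x ∂μ := hstep
            _ ≤ a * (δ * (r * A)) := mul_le_mul_of_nonneg_left hsum ha0
            _ = a * δ * r * A := by ring
        -- now 1 - aδr ≥ 1/r ⇒ A ≤ r B
        have h2 : A * (1/r) ≤ A * (1 - a*δ*r) := mul_le_mul_of_nonneg_left hrinv hA0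
        have h3 : A * (1 - a*δ*r) = A - a*δ*r*A := by ring
        have h1 : A / r ≤ B := by
          rw [div_eq_mul_one_div]
          linarith
        have h4 : A ≤ B * r := (div_le_iff₀ hr0).mp h1
        linarith [mul_comm B r, h4, (by ring : B * r = r * B)]
  exact main ((V ∪ W).card) V W hVW hWp le_rfl

lemma psi_pos [Fintype I] (hθmeas : ∀ i, Measurable (θ i))
    (hθ01 : ∀ i x, θ i x = 0 ∨ θ i x = 1) {a : ℝ} (ha0 : 0 ≤ a) (ha1 : a < 1)
    (V : Finset I) :
    0 < ∫ x, Pf θ a V x ∂μ := by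
  have hpt : ∀ x, (1 - a)^(V.card) ≤ Pf θ a V x := by
    intro x
    have : (1-a)^(V.card) = ∏ _i ∈ V, (1-a) := (Finset.prod_const _).symm
    rw [this, Pf]
    refine Finset.prod_le_prod (fun i _ => by linarith) fun i _ => ?_
    have h0 := θnn hθ01 i x; have h1 := θle1 hθ01 i x
    nlinarith
  have h2 : (0:ℝ) < (1 - a)^(V.card) := pow_pos (by linarith) _
  have h3 : (1 - a)^(V.card) = ∫ _x, ((1-a)^(V.card) : ℝ) ∂μ := by simp
  calc (0:ℝ) < (1 - a)^(V.card) := h2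
    _ = ∫ _x, ((1-a)^(V.card) : ℝ) ∂μ := h3
    _ ≤ ∫ x, Pf θ a V x ∂μ :=
        integral_mono (integrable_const _) (integrable_P hθmeas hθ01 a V) hpt

lemma hasDeriv_psi [Fintype I] (hθmeas : ∀ i, Measurable (θ i))
    (hθ01 : ∀ i x, θ i x = 0 ∨ θ i x = 1) (a : ℝ) :
    HasDerivAt (fun b => ∫ x, Pf θ b Finset.univ x ∂μ)
      (- ∑ i, ∫ x, θ i x * Pf θ a (Finset.univ.erase i) x ∂μ) a := by
  have h := hasDeriv_TP (μ := μ) hθmeas hθ01 Finset.univ ∅ a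
  have hfun : (fun b => ∫ x, Tf θ (∅ : Finset I) x * Pf θ b Finset.univ x ∂μ)
      = fun b => ∫ x, Pf θ b Finset.univ x ∂μ := by
    funext b; congr 1; funext x; simp [Tf]
  have hder : (- ∑ i ∈ Finset.univ, ∫ x, Tf θ (insert i (∅ : Finset I)) x
        * Pf θ a (Finset.univ.erase i) x ∂μ)
      = (- ∑ i, ∫ x, θ i x * Pf θ a (Finset.univ.erase i) x ∂μ) := by
    congr 1
    refine Finset.sum_congr rfl fun i _ => ?_
    congr 1; funext x
    simp [Tf]
  rw [hfun, hder] at h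
  exact h

lemma diffineq [Fintype I] [Nonempty I] (hθmeas : ∀ i, Measurable (θ i))
    (hθ01 : ∀ i x, θ i x = 0 ∨ θ i x = 1)
    (L : SimpleGraph I) [DecidableRel L.Adj]
    (hdep : ∀ A B : Finset I, Disjoint A B → (∀ i ∈ A, ∀ j ∈ B, ¬ L.Adj i j) →
      IndepFun (fun x => fun i : A => θ i x) (fun x => fun j : B => θ j x) μ)
    {p : I → ℝ} (hp : ∀ i, p i = (μ {x | θ i x = 1}).toReal)
    {δ q a : ℝ} (hδnb : ∀ k, ∑ j ∈ L.neighborFinset k, p j ≤ δ)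
    (hq0 : 0 < q) (hq1 : q ≤ 1) (hqδ : q * δ ≤ 1/4)
    (ha0 : 0 ≤ a) (haq : a ≤ q) :
    ((∑ i, p i) - a * (2 / (1 + Real.sqrt (1 - a/q)))
        * ∑ i, ∑ j ∈ L.neighborFinset i, ∫ x, θ i x * θ j x ∂μ)
      * (∫ x, Pf θ a Finset.univ x ∂μ)
      ≤ ∑ i, ∫ x, θ i x * Pf θ a (Finset.univ.erase i) x ∂μ := by
  have ha1 : a ≤ 1 := le_trans haq hq1
  set r : ℝ := 2 / (1 + Real.sqrt (1 - a/q)) with hrdef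
  have hsq0 : (0:ℝ) ≤ Real.sqrt (1 - a/q) := Real.sqrt_nonneg _
  have hr0 : 0 < r := by rw [hrdef]; exact div_pos (by norm_num) (by linarith)
  have hp0 : ∀ j, 0 ≤ p j := fun j => (hp j) ▸ ENNReal.toReal_nonneg
  set ψa := ∫ x, Pf θ a Finset.univ x ∂μ with hψa
  have hψa0 : 0 ≤ ψa := integral_nonneg fun x => Pf_nonneg hθ01 ha1 _ x
  -- the per-index inequality
  have hper : ∀ i : I,
      (p i - a * r * ∑ j ∈ L.neighborFinset i, ∫ x, θ i x * θ j x ∂μ) * ψa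
        ≤ ∫ x, θ i x * Pf θ a (Finset.univ.erase i) x ∂μ := by
    intro i
    set N := L.neighborFinset i with hN
    set R := (Finset.univ.erase i) \ N with hR
    have hNsub : N ⊆ Finset.univ.erase i := by
      intro j hj
      refine Finset.mem_erase.mpr ⟨?_, Finset.mem_univ j⟩
      exact ((SimpleGraph.mem_neighborFinset L i j).mp hj).ne'
    have hNR : Disjoint N R := Finset.disjoint_sdiff
    have hunion : N ∪ R = Finset.univ.erase i := Finset.union_sdiff_of_subset hNsub
    have hiR : i ∉ R := by
      intro h
      exact (Finset.mem_erase.mp (Finset.mem_sdiff.mp h).1).1 rfl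
    set ψR := ∫ x, Pf θ a R x ∂μ with hψR
    have hψR0 : 0 ≤ ψR := integral_nonneg fun x => Pf_nonneg hθ01 ha1 _ x
    -- pointwise
    have hpt : ∀ x, θ i x * Pf θ a R x - a * ∑ j ∈ N, (θ i x * θ j x * Pf θ a R x)
        ≤ θ i x * Pf θ a (Finset.univ.erase i) x := by
      intro x
      have hsplit : Pf θ a (Finset.univ.erase i) x = Pf θ a N x * Pf θ a R x := by
        simp only [Pf]
        rw [← Finset.prod_union hNR, hunion]
      have hW := one_sub_sum_le_Pf hθ01 ha0 ha1 N x
      have hPR0 : 0 ≤ Pf θ a R x := Pf_nonneg hθ01 ha1 _ x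
      have hθi0 := θnn hθ01 i x
      have h1 : θ i x * ((1 - a * ∑ j ∈ N, θ j x) * Pf θ a R x)
          ≤ θ i x * (Pf θ a N x * Pf θ a R x) :=
        mul_le_mul_of_nonneg_left (mul_le_mul_of_nonneg_right hW hPR0) hθi0
      have heq2 : ∑ j ∈ N, (θ i x * θ j x * Pf θ a R x)
          = (∑ j ∈ N, θ j x) * (θ i x * Pf θ a R x) := by
        rw [Finset.sum_mul]
        exact Finset.sum_congr rfl fun j _ => by ring
      have heq : θ i x * Pf θ a R x - a * ∑ j ∈ N, (θ i x * θ j x * Pf θ a R x)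
          = θ i x * ((1 - a * ∑ j ∈ N, θ j x) * Pf θ a R x) := by
        rw [heq2]; ring
      rw [heq, hsplit]
      exact h1
    -- integrability facts
    have hint1 : Integrable (fun x => θ i x * Pf θ a R x) μ := by
      have := integrable_TP (μ := μ) hθmeas hθ01 a {i} R
      simpa [Tf] using this
    have hint2 : ∀ j, Integrable (fun x => θ i x * θ j x * Pf θ a R x) μ := by
      intro j
      have hTPij := integrable_TP (μ := μ) hθmeas hθ01 a {i, j} R
      by_cases hij : i = j
      · subst hij
        have heq : (fun x => θ i x * θ i x * Pf θ a R x)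
            = fun x => θ i x * Pf θ a R x := by
          funext x; rw [θsq hθ01]
        rw [heq]; exact hint1
      · have heq : (fun x => Tf θ {i, j} x * Pf θ a R x)
            = fun x => θ i x * θ j x * Pf θ a R x := by
          funext x; rw [Tf, Finset.prod_pair hij]
        rw [← heq]; exact hTPij
    have hint3 : Integrable (fun x => θ i x * Pf θ a (Finset.univ.erase i) x) μ := by
      have := integrable_TP (μ := μ) hθmeas hθ01 a {i} (Finset.univ.erase i)
      simpa [Tf] using this
    -- integrate the pointwise bound
    have hmono : ∫ x, (θ i x * Pf θ a R x - a * ∑ j ∈ N, (θ i x * θ j x * Pf θ a R x)) ∂μ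
        ≤ ∫ x, θ i x * Pf θ a (Finset.univ.erase i) x ∂μ := by
      refine integral_mono ?_ hint3 hpt
      exact hint1.sub ((integrable_finset_sum N fun j _ => hint2 j).const_mul a)
    have hlhs : ∫ x, (θ i x * Pf θ a R x - a * ∑ j ∈ N, (θ i x * θ j x * Pf θ a R x)) ∂μ
        = (∫ x, θ i x * Pf θ a R x ∂μ)
          - a * ∑ j ∈ N, ∫ x, θ i x * θ j x * Pf θ a R x ∂μ := by
      rw [integral_sub hint1 ((integrable_finset_sum N fun j _ => hint2 j).const_mul a)]
      congr 1
      rw [integral_const_mul, integral_finset_sum N fun j _ => hint2 j]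
    -- the independent factorization for the first term
    have hfirst : ∫ x, θ i x * Pf θ a R x ∂μ = p i * ψR := by
      have hdisj : Disjoint ({i} : Finset I) R := Finset.disjoint_singleton_left.mpr hiR
      have hadj : ∀ l ∈ ({i} : Finset I), ∀ j ∈ R, ¬ L.Adj l j := by
        intro l hl j hj
        rw [Finset.mem_singleton] at hl; subst hl
        have hjN : j ∉ N := (Finset.mem_sdiff.mp hj).2
        exact fun hadj => hjN ((SimpleGraph.mem_neighborFinset L l j).mpr hadj)
      have h := indep_TP hθmeas L hdep {i} R hdisj hadj a
      have hTf1 : ∀ x, Tf θ ({i} : Finset I) x = θ i x := by intro x; simp [Tf]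
      simp only [hTf1] at h
      rw [h, integral_theta hθmeas hθ01 hp i]
    -- the second terms
    have hsecond : ∀ j ∈ N, ∫ x, θ i x * θ j x * Pf θ a R x ∂μ
        ≤ (∫ x, θ i x * θ j x ∂μ) * (r * ψR) := by
      intro j hj
      have hadjij : L.Adj i j := (SimpleGraph.mem_neighborFinset L i j).mp hj
      have hij : i ≠ j := hadjij.ne
      have hjR : j ∉ R := fun h => (Finset.mem_sdiff.mp h).2 hj
      set Nj := L.neighborFinset j with hNj
      set R2 := R \ Nj with hR2
      have hmono2 : ∫ x, θ i x * θ j x * Pf θ a R x ∂μ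
          ≤ ∫ x, θ i x * θ j x * Pf θ a R2 x ∂μ := by
        refine integral_mono (hint2 j) ?_ ?_
        · have hTPij := integrable_TP (μ := μ) hθmeas hθ01 a {i, j} R2
          have heq : (fun x => Tf θ {i, j} x * Pf θ a R2 x)
              = fun x => θ i x * θ j x * Pf θ a R2 x := by
            funext x; rw [Tf, Finset.prod_pair hij]
          rw [← heq]; exact hTPij
        · intro x
          refine mul_le_mul_of_nonneg_left (Pf_mono hθ01 ha0 ha1 Finset.sdiff_subset x) ?_
          exact mul_nonneg (θnn hθ01 i x) (θnn hθ01 j x)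
      have hfact : ∫ x, θ i x * θ j x * Pf θ a R2 x ∂μ
          = (∫ x, θ i x * θ j x ∂μ) * ∫ x, Pf θ a R2 x ∂μ := by
        have hdisj : Disjoint ({i, j} : Finset I) R2 := by
          rw [Finset.disjoint_left]
          intro l hl hlR2
          rcases Finset.mem_insert.mp hl with h1 | h1
          · subst h1; exact hiR (Finset.mem_sdiff.mp hlR2).1
          · rw [Finset.mem_singleton] at h1; subst h1
            exact hjR (Finset.mem_sdiff.mp hlR2).1
        have hadj : ∀ l ∈ ({i, j} : Finset I), ∀ k ∈ R2, ¬ L.Adj l k := by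
          intro l hl k hk
          rcases Finset.mem_insert.mp hl with h1 | h1
          · subst h1
            have hkN : k ∉ N := (Finset.mem_sdiff.mp (Finset.mem_sdiff.mp hk).1).2
            exact fun hadj => hkN ((SimpleGraph.mem_neighborFinset L l k).mpr hadj)
          · rw [Finset.mem_singleton] at h1; subst h1
            have hkNj : k ∉ Nj := (Finset.mem_sdiff.mp hk).2
            exact fun hadj => hkNj ((SimpleGraph.mem_neighborFinset L l k).mpr hadj)
        have h := indep_TP hθmeas L hdep {i, j} R2 hdisj hadj a
        have hTf2 : ∀ x, Tf θ ({i, j} : Finset I) x = θ i x * θ j x := by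
          intro x; rw [Tf, Finset.prod_pair hij]
        simp only [hTf2] at h
        exact h
      have hratio : ∫ x, Pf θ a R2 x ∂μ ≤ r * ψR := by
        have hsplit : R2 ∪ (R ∩ Nj) = R := by
          ext l
          simp only [hR2, Finset.mem_union, Finset.mem_sdiff, Finset.mem_inter]
          tauto
        have hdisj2 : Disjoint R2 (R ∩ Nj) := by
          rw [Finset.disjoint_left]
          intro l hl hl2
          exact (Finset.mem_sdiff.mp hl).2 (Finset.mem_inter.mp hl2).2
        have hmass : ∑ k ∈ R ∩ Nj, p k ≤ δ := by
          refine le_trans ?_ (hδnb j)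
          exact Finset.sum_le_sum_of_subset_of_nonneg
            (Finset.inter_subset_right) (fun l _ _ => hp0 l)
        have h := ratio_lemma hθmeas hθ01 L hdep hp hδnb hq0 hq1 hqδ ha0 haq
          R2 (R ∩ Nj) hdisj2 hmass
        rw [hsplit] at h
        exact h
      have hE0 : 0 ≤ ∫ x, θ i x * θ j x ∂μ :=
        integral_nonneg fun x => mul_nonneg (θnn hθ01 i x) (θnn hθ01 j x)
      calc ∫ x, θ i x * θ j x * Pf θ a R x ∂μ
          ≤ ∫ x, θ i x * θ j x * Pf θ a R2 x ∂μ := hmono2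
        _ = (∫ x, θ i x * θ j x ∂μ) * ∫ x, Pf θ a R2 x ∂μ := hfact
        _ ≤ (∫ x, θ i x * θ j x ∂μ) * (r * ψR) :=
            mul_le_mul_of_nonneg_left hratio hE0
    -- combine
    have hsum : ∑ j ∈ N, ∫ x, θ i x * θ j x * Pf θ a R x ∂μ
        ≤ (∑ j ∈ N, ∫ x, θ i x * θ j x ∂μ) * (r * ψR) := by
      rw [Finset.sum_mul]
      exact Finset.sum_le_sum hsecond
    have hTi : (p i - a * r * ∑ j ∈ N, ∫ x, θ i x * θ j x ∂μ) * ψR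
        ≤ ∫ x, θ i x * Pf θ a (Finset.univ.erase i) x ∂μ := by
      have h1 : a * ∑ j ∈ N, ∫ x, θ i x * θ j x * Pf θ a R x ∂μ
          ≤ a * ((∑ j ∈ N, ∫ x, θ i x * θ j x ∂μ) * (r * ψR)) :=
        mul_le_mul_of_nonneg_left hsum ha0
      have h2 : (p i - a * r * ∑ j ∈ N, ∫ x, θ i x * θ j x ∂μ) * ψR
          = p i * ψR - a * ((∑ j ∈ N, ∫ x, θ i x * θ j x ∂μ) * (r * ψR)) := by ring
      rw [h2]
      rw [hlhs, hfirst] at hmono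
      linarith
    -- compare ψR with ψa
    have hψRψa : ψa ≤ ψR := by
      refine integral_mono (integrable_P hθmeas hθ01 a _) (integrable_P hθmeas hθ01 a _) ?_
      intro x
      exact Pf_mono hθ01 ha0 ha1 (Finset.subset_univ _) x
    by_cases hb : 0 ≤ p i - a * r * ∑ j ∈ N, ∫ x, θ i x * θ j x ∂μ
    · calc (p i - a * r * ∑ j ∈ N, ∫ x, θ i x * θ j x ∂μ) * ψa
          ≤ (p i - a * r * ∑ j ∈ N, ∫ x, θ i x * θ j x ∂μ) * ψR :=
            mul_le_mul_of_nonneg_left hψRψa hb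
        _ ≤ _ := hTi
    · push_neg at hb
      have hT0 : 0 ≤ ∫ x, θ i x * Pf θ a (Finset.univ.erase i) x ∂μ :=
        integral_nonneg fun x => mul_nonneg (θnn hθ01 i x) (Pf_nonneg hθ01 ha1 _ x)
      have hneg : (p i - a * r * ∑ j ∈ N, ∫ x, θ i x * θ j x ∂μ) * ψa ≤ 0 :=
        mul_nonpos_of_nonpos_of_nonneg (le_of_lt hb) hψa0
      linarith
  -- sum over i
  have hdistrib : ((∑ i, p i) - a * r
        * ∑ i, ∑ j ∈ L.neighborFinset i, ∫ x, θ i x * θ j x ∂μ)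
        * ψa
      = ∑ i, (p i - a * r * ∑ j ∈ L.neighborFinset i, ∫ x, θ i x * θ j x ∂μ) * ψa := by
    rw [← Finset.sum_mul]
    congr 1
    rw [Finset.sum_sub_distrib, ← Finset.mul_sum]
  rw [hdistrib]
  exact Finset.sum_le_sum fun i _ => hper i

lemma main_bound [Fintype I] [Nonempty I] (hθmeas : ∀ i, Measurable (θ i))
    (hθ01 : ∀ i x, θ i x = 0 ∨ θ i x = 1)
    (L : SimpleGraph I) [DecidableRel L.Adj]
    (hdep : ∀ A B : Finset I, Disjoint A B → (∀ i ∈ A, ∀ j ∈ B, ¬ L.Adj i j) →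
      IndepFun (fun x => fun i : A => θ i x) (fun x => fun j : B => θ j x) μ)
    {p : I → ℝ} (hp : ∀ i, p i = (μ {x | θ i x = 1}).toReal)
    {δ q : ℝ} (hδnb : ∀ k, ∑ j ∈ L.neighborFinset k, p j ≤ δ)
    (hq0 : 0 < q) (hq1 : q ≤ 1) (hqδ : q * δ ≤ 1/4)
    (m D : ℝ) (hm : m = ∑ i, p i)
    (hD : D = ∑ i, ∑ j ∈ L.neighborFinset i, ∫ x, θ i x * θ j x ∂μ) :
    (μ {x | ∑ i, θ i x = 0}).toReal ≤ Real.exp (-(m*q) + (2/3) * D * q^2) := by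
  set ψ : ℝ → ℝ := fun a => ∫ x, Pf θ a Finset.univ x ∂μ with hψ
  set ψd : ℝ → ℝ :=
    fun a => - ∑ i, ∫ x, θ i x * Pf θ a (Finset.univ.erase i) x ∂μ with hψd
  have hderiv : ∀ a, HasDerivAt ψ (ψd a) a := fun a => hasDeriv_psi hθmeas hθ01 a
  set K : ℝ → ℝ :=
    fun a => 2*q*a + (4*q^2/3) * ((1 - a/q) * Real.sqrt (1 - a/q) - 1) with hK
  have hKcont : Continuous K := by
    apply Continuous.add
    · exact continuous_const.mul continuous_id
    · apply Continuous.mul continuous_const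
      apply Continuous.sub ?_ continuous_const
      exact (continuous_const.sub (continuous_id.div_const q)).mul
        (Real.continuous_sqrt.comp (continuous_const.sub (continuous_id.div_const q)))
  set Lf : ℝ → ℝ := fun a => Real.log (ψ a) + (m * a - D * K a) with hLf
  have key : ∀ c ∈ Set.Ioo (0:ℝ) q,
      (μ {x | ∑ i, θ i x = 0}).toReal ≤ Real.exp (-(m*c) + D * K c) := by
    intro c hc
    obtain ⟨hc0, hcq⟩ := hc
    have hc1 : c < 1 := lt_of_lt_of_le hcq hq1
    have hψpos : ∀ a ∈ Set.Icc (0:ℝ) c, 0 < ψ a := fun a ha =>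
      psi_pos hθmeas hθ01 ha.1 (lt_of_le_of_lt ha.2 hc1) Finset.univ
    have hLderiv : ∀ a ∈ Set.Ioo (0:ℝ) c, HasDerivAt Lf
        (ψd a / ψ a + (m - D * (2*q*1 + (4*q^2/3) * ((-(1/q)) * Real.sqrt (1 - a/q)
          + (1 - a/q) * ((-(1/q)) / (2 * Real.sqrt (1 - a/q))))))) a := by
      intro a ha
      have haq : a < q := lt_trans ha.2 hcq
      have hwpos : 0 < 1 - a/q := by
        have h1 : a/q < 1 := (div_lt_one hq0).mpr haq
        linarith
      have hw : HasDerivAt (fun b : ℝ => 1 - b/q) (-(1/q)) a := by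
        simpa using ((hasDerivAt_id a).div_const q).const_sub 1
      have hv : HasDerivAt (fun b : ℝ => Real.sqrt (1 - b/q))
          ((-(1/q)) / (2 * Real.sqrt (1 - a/q))) a := hw.sqrt (ne_of_gt hwpos)
      have hprod : HasDerivAt (fun b : ℝ => (1 - b/q) * Real.sqrt (1 - b/q))
          ((-(1/q)) * Real.sqrt (1 - a/q)
            + (1 - a/q) * ((-(1/q)) / (2 * Real.sqrt (1 - a/q)))) a := hw.mul hv
      have h1 : HasDerivAt (fun b : ℝ => 2*q*b) (2*q*1) a := (hasDerivAt_id a).const_mul (2*q)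
      have h2 := (hprod.sub_const 1).const_mul (4*q^2/3)
      have hKd : HasDerivAt K (2*q*1 + (4*q^2/3) * ((-(1/q)) * Real.sqrt (1 - a/q)
          + (1 - a/q) * ((-(1/q)) / (2 * Real.sqrt (1 - a/q))))) a := h1.add h2
      have hamem : a ∈ Set.Icc (0:ℝ) c := ⟨ha.1.le, ha.2.le⟩
      have hlog := (hderiv a).log (ne_of_gt (hψpos a hamem))
      have hma : HasDerivAt (fun b : ℝ => m * b) m a := by
        simpa using (hasDerivAt_id a).const_mul m
      exact hlog.add (hma.sub (hKd.const_mul D))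
    have hLmono : AntitoneOn Lf (Set.Icc (0:ℝ) c) := by
      apply antitoneOn_of_deriv_nonpos (convex_Icc 0 c)
      · have hψcont : ContinuousOn ψ (Set.Icc 0 c) := fun a _ =>
          ((hderiv a).continuousAt).continuousWithinAt
        have hlogcont : ContinuousOn (fun a => Real.log (ψ a)) (Set.Icc 0 c) :=
          ContinuousOn.log hψcont (fun a ha => ne_of_gt (hψpos a ha))
        exact hlogcont.add
          (((continuous_const.mul continuous_id).sub
            (continuous_const.mul hKcont)).continuousOn)
      · rw [interior_Icc]
        exact fun a ha => (hLderiv a ha).differentiableAt.differentiableWithinAt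
      · rw [interior_Icc]
        intro a ha
        rw [(hLderiv a ha).deriv]
        -- now show the derivative value is ≤ 0
        have haq : a < q := lt_trans ha.2 hcq
        have hwpos : 0 < 1 - a/q := by
          have h1 : a/q < 1 := (div_lt_one hq0).mpr haq
          linarith
        have hψposa : 0 < ψ a := hψpos a ⟨ha.1.le, ha.2.le⟩
        have hdi := diffineq hθmeas hθ01 L hdep hp hδnb hq0 hq1 hqδ ha.1.le haq.le
        rw [← hm, ← hD] at hdi
        have hpsieq : (∫ x, Pf θ a Finset.univ x ∂μ) = ψ a := rfl
        rw [hpsieq] at hdi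
        have hsum : ∑ i, ∫ x, θ i x * Pf θ a (Finset.univ.erase i) x ∂μ = - ψd a := by
          rw [hψd]; ring_nf
        rw [hsum] at hdi
        have hsq := Real.sq_sqrt hwpos.le
        have hsqpos := Real.sqrt_pos.mpr hwpos
        generalize hvdef : Real.sqrt (1 - a/q) = v at hdi hsq hsqpos ⊢
        have hv0 : 0 < v := hsqpos
        have hv2 : v^2 = 1 - a/q := hsq
        have hKd2 : 2*q*1 + (4*q^2/3) * ((-(1/q)) * v
            + (1 - a/q) * ((-(1/q)) / (2 * v))) = 2*q - 2*q*v := by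
          rw [← hv2]
          field_simp
          ring
        rw [hKd2]
        have hae : a = q*(1 - v^2) := by
          rw [hv2]; field_simp; ring
        have h1v : (0:ℝ) < 1 + v := by linarith
        have harr : a * (2 / (1 + v)) = 2*q - 2*q*v := by
          rw [hae]; field_simp; ring
        rw [harr] at hdi
        -- hdi : (m - (2q - 2qv) * D) * ψ a ≤ - ψd a
        have hgoal : ψd a ≤ (-(m) + D * (2*q - 2*q*v)) * ψ a := by nlinarith [hdi]
        have hdiv : ψd a / ψ a ≤ -(m) + D * (2*q - 2*q*v) :=
          (div_le_iff₀ hψposa).mpr hgoal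
        linarith
    have h0mem : (0:ℝ) ∈ Set.Icc (0:ℝ) c := ⟨le_rfl, hc0.le⟩
    have hcmem : c ∈ Set.Icc (0:ℝ) c := ⟨hc0.le, le_rfl⟩
    have hLc : Lf c ≤ Lf 0 := hLmono h0mem hcmem hc0.le
    have hψ0 : ψ 0 = 1 := by
      rw [hψ]
      simp [Pf]
    have hK0 : K 0 = 0 := by
      rw [hK]
      simp
    have hL0 : Lf 0 = 0 := by
      rw [hLf]
      simp only [hψ0, hK0, Real.log_one]
      ring
    have hlogc : Real.log (ψ c) ≤ -(m*c) + D * K c := by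
      have h2 : Lf c ≤ 0 := le_trans hLc (le_of_eq hL0)
      rw [hLf] at h2
      simp only at h2
      linarith
    have hψc : ψ c ≤ Real.exp (-(m*c) + D * K c) := by
      have hpc := hψpos c hcmem
      calc ψ c = Real.exp (Real.log (ψ c)) := (Real.exp_log hpc).symm
        _ ≤ _ := Real.exp_le_exp.mpr hlogc
    have hms : MeasurableSet {x | ∑ i, θ i x = 0} :=
      (Finset.measurable_sum Finset.univ fun i _ => hθmeas i) (measurableSet_singleton 0)
    have hPle : (μ {x | ∑ i, θ i x = 0}).toReal ≤ ψ c := by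
      rw [← measureReal_def, ← integral_indicator_one hms, hψ]
      refine integral_mono ((integrable_const (1:ℝ)).indicator hms)
        (integrable_P hθmeas hθ01 c Finset.univ) ?_
      intro x
      by_cases hx : x ∈ {x | ∑ i, θ i x = 0}
      · have hx' : ∑ i, θ i x = 0 := hx
        have hall := (Finset.sum_eq_zero_iff_of_nonneg
          (fun i _ => θnn hθ01 i x)).mp hx'
        have hPf1 : Pf θ c Finset.univ x = 1 := by
          rw [Pf]
          apply Finset.prod_eq_one
          intro i hi
          rw [hall i hi]
          ring
        rw [Set.indicator_of_mem hx]
        simp only [Pi.one_apply, hPf1]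
        exact le_rfl
      · rw [Set.indicator_of_notMem hx]
        exact Pf_nonneg hθ01 hc1.le _ x
    linarith
  -- pass to the limit c → q⁻
  have hKq : K q = (2/3) * q^2 := by
    rw [hK]
    simp only
    have h0 : 1 - q/q = 0 := by rw [div_self hq0.ne', sub_self]
    rw [h0]
    simp [Real.sqrt_zero]
    ring
  have hcont : ContinuousAt (fun c => Real.exp (-(m*c) + D * K c)) q := by
    apply Continuous.continuousAt
    exact Real.continuous_exp.comp
      (((continuous_const.mul continuous_id).neg).add (continuous_const.mul hKcont))
  have htend : Filter.Tendsto (fun c => Real.exp (-(m*c) + D * K c))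
      (nhdsWithin q (Set.Iio q)) (nhds (Real.exp (-(m*q) + D * K q))) :=
    hcont.tendsto.mono_left nhdsWithin_le_nhds
  have hev : ∀ᶠ c in nhdsWithin q (Set.Iio q),
      (μ {x | ∑ i, θ i x = 0}).toReal ≤ Real.exp (-(m*c) + D * K c) := by
    filter_upwards [Ioo_mem_nhdsLT_of_mem (⟨hq0, le_rfl⟩ : q ∈ Set.Ioc 0 q)] with c hc
    exact key c hc
  have hfin := ge_of_tendsto htend hev
  rw [hKq] at hfin
  calc (μ {x | ∑ i, θ i x = 0}).toReal ≤ Real.exp (-(m*q) + D * ((2/3) * q^2)) := hfin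
    _ = Real.exp (-(m*q) + (2/3) * D * q^2) := by ring_nf

end Basic

end SuenProof

open SuenProof in
theorem suen_inequality
    {Ω : Type*} [MeasurableSpace Ω] (μ : Measure Ω) [IsProbabilityMeasure μ]
    {I : Type*} [Fintype I] [Nonempty I]
    (θ : I → Ω → ℝ)
    (hθmeas : ∀ i, Measurable (θ i))
    (hθ01 : ∀ i x, θ i x = 0 ∨ θ i x = 1)
    (p : I → ℝ) (hp : ∀ i, p i = (μ {x | θ i x = 1}).toReal)
    (L : SimpleGraph I) [DecidableRel L.Adj]
    -- L is a dependency graph: subfamilies indexed by disjoint sets of vertices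
    -- with no edge of L between them are independent
    (hdep : ∀ A B : Finset I, Disjoint A B →
      (∀ i ∈ A, ∀ j ∈ B, ¬ L.Adj i j) →
      IndepFun (fun x => fun i : A => θ i x) (fun x => fun j : B => θ j x) μ)
    (m Δ δ : ℝ)
    (hm : m = ∑ i, p i)
    (hΔ : Δ = (1 / 2) * ∑ i, ∑ j,
      if L.Adj i j then (∫ x, θ i x * θ j x ∂μ) else 0)
    (hδ : δ = ⨆ i, ∑ j, if L.Adj i j then p j else 0)
    (hΔpos : 0 < Δ) (hδpos : 0 < δ) :
    (μ {x | ∑ i, θ i x = 0}).toReal ≤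
      Real.exp (-(min (m ^ 2 / (8 * Δ)) (min (m / 2) (m / (6 * δ))))) := by
  classical
  have hp0 : ∀ j, 0 ≤ p j := fun j => (hp j) ▸ ENNReal.toReal_nonneg
  -- rewrite neighbor sums
  have hNsum : ∀ (f : I → ℝ) (k : I),
      ∑ j ∈ L.neighborFinset k, f j = ∑ j, if L.Adj k j then f j else 0 := by
    intro f k
    rw [SimpleGraph.neighborFinset_eq_filter, Finset.sum_filter]
  -- δ dominates each neighborhood sum
  have hδnb : ∀ k, ∑ j ∈ L.neighborFinset k, p j ≤ δ := by
    intro k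
    rw [hNsum p k, hδ]
    exact le_ciSup (f := fun i => ∑ j, if L.Adj i j then p j else 0)
      (Set.Finite.bddAbove (Set.finite_range _)) k
  -- integrability of the pair products
  have hintθθ : ∀ i j, Integrable (fun x => θ i x * θ j x) μ := by
    intro i j
    refine Integrable.mono' (integrable_const 1)
      ((hθmeas i).mul (hθmeas j)).aestronglyMeasurable ?_
    refine Filter.Eventually.of_forall fun x => ?_
    rw [Real.norm_eq_abs, abs_mul]
    have h1 := θnn hθ01 i x; have h2 := θle1 hθ01 i x
    have h3 := θnn hθ01 j x; have h4 := θle1 hθ01 j x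
    rw [abs_of_nonneg h1, abs_of_nonneg h3]
    nlinarith
  have hintθ : ∀ i, Integrable (θ i) μ := by
    intro i
    refine Integrable.mono' (integrable_const 1) (hθmeas i).aestronglyMeasurable ?_
    refine Filter.Eventually.of_forall fun x => ?_
    rw [Real.norm_eq_abs, abs_of_nonneg (θnn hθ01 i x)]
    exact θle1 hθ01 i x
  have hEp : ∀ i j, (∫ x, θ i x * θ j x ∂μ) ≤ p i := by
    intro i j
    rw [← integral_theta hθmeas hθ01 hp i]
    refine integral_mono (hintθθ i j) (hintθ i) ?_
    intro x
    show θ i x * θ j x ≤ θ i x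
    have h1 := θnn hθ01 i x; have h2 := θle1 hθ01 j x
    have h3 := θnn hθ01 j x
    nlinarith
  have hE0 : ∀ i j, 0 ≤ ∫ x, θ i x * θ j x ∂μ := fun i j =>
    integral_nonneg fun x => mul_nonneg (θnn hθ01 i x) (θnn hθ01 j x)
  -- m is positive
  have hm0 : 0 < m := by
    by_contra hc
    push_neg at hc
    have hsnn : 0 ≤ ∑ i, p i := Finset.sum_nonneg fun i _ => hp0 i
    have hsum0 : ∑ i, p i = 0 := le_antisymm (hm ▸ hc) hsnn
    have hpz : ∀ i ∈ Finset.univ, p i = (0:ℝ) :=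
      (Finset.sum_eq_zero_iff_of_nonneg fun i _ => hp0 i).mp hsum0
    have hS0 : ∑ i, ∑ j, (if L.Adj i j then (∫ x, θ i x * θ j x ∂μ) else 0) ≤ 0 := by
      refine Finset.sum_nonpos fun i _ => Finset.sum_nonpos fun j _ => ?_
      by_cases h : L.Adj i j
      · simp only [h, if_true]
        exact le_trans (hEp i j) (le_of_eq (hpz i (Finset.mem_univ i)))
      · simp [h]
    rw [hΔ] at hΔpos
    linarith
  -- the D-identity
  have hDeq : 2*Δ = ∑ i, ∑ j ∈ L.neighborFinset i, ∫ x, θ i x * θ j x ∂μ := by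
    have h1 : ∀ i : I, ∑ j ∈ L.neighborFinset i, ∫ x, θ i x * θ j x ∂μ
        = ∑ j, if L.Adj i j then (∫ x, θ i x * θ j x ∂μ) else 0 := fun i =>
      hNsum (fun j => ∫ x, θ i x * θ j x ∂μ) i
    rw [Finset.sum_congr rfl fun i _ => h1 i, hΔ]
    ring
  -- choice of q
  set q := min 1 (min (m/(4*Δ)) (1/(4*δ))) with hqdef
  have hq0 : 0 < q :=
    lt_min one_pos (lt_min (div_pos hm0 (by linarith)) (div_pos one_pos (by linarith)))
  have hq1 : q ≤ 1 := min_le_left _ _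
  have hqm : q ≤ m/(4*Δ) := le_trans (min_le_right _ _) (min_le_left _ _)
  have hqd : q ≤ 1/(4*δ) := le_trans (min_le_right _ _) (min_le_right _ _)
  have hqδ : q * δ ≤ 1/4 := by
    calc q * δ ≤ (1/(4*δ)) * δ := mul_le_mul_of_nonneg_right hqd hδpos.le
      _ = 1/4 := by
          rw [div_mul_eq_mul_div, one_mul, div_eq_div_iff (by linarith) (by norm_num)]
          ring
  -- apply the main bound
  have hmain := main_bound hθmeas hθ01 L hdep hp hδnb hq0 hq1 hqδ m (2*Δ) hm hDeq
  refine le_trans hmain (Real.exp_le_exp.mpr ?_)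
  -- final arithmetic
  have hΔq : Δ * q ≤ m/4 := by
    have h1 : Δ * q ≤ Δ * (m/(4*Δ)) := mul_le_mul_of_nonneg_left hqm hΔpos.le
    have h2 : Δ * (m/(4*Δ)) = m/4 := by field_simp
    linarith
  have h23 : (2/3)*m*q ≤ m*q - (2/3)*(2*Δ)*q^2 := by
    nlinarith [mul_nonneg hq0.le (sub_nonneg.mpr hΔq)]
  have hminle : min (m ^ 2 / (8 * Δ)) (min (m / 2) (m / (6 * δ))) ≤ (2/3)*m*q := by
    have hmin1 : min (m ^ 2 / (8 * Δ)) (min (m / 2) (m / (6 * δ))) ≤ m/2 :=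
      le_trans (min_le_right _ _) (min_le_left _ _)
    have hmin2 : min (m ^ 2 / (8 * Δ)) (min (m / 2) (m / (6 * δ))) ≤ m^2/(8*Δ) :=
      min_le_left _ _
    have hmin3 : min (m ^ 2 / (8 * Δ)) (min (m / 2) (m / (6 * δ))) ≤ m/(6*δ) :=
      le_trans (min_le_right _ _) (min_le_right _ _)
    rcases min_cases (1:ℝ) (min (m/(4*Δ)) (1/(4*δ))) with ⟨hqe, _⟩ | ⟨hqe, _⟩
    · rw [hqdef, hqe]
      calc min (m ^ 2 / (8 * Δ)) (min (m / 2) (m / (6 * δ))) ≤ m/2 := hmin1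
        _ ≤ (2/3)*m*1 := by linarith
    · rcases min_cases (m/(4*Δ)) (1/(4*δ)) with ⟨hqe2, _⟩ | ⟨hqe2, _⟩
      · rw [hqdef, hqe, hqe2]
        have heq : (2/3)*m*(m/(4*Δ)) = m^2/(6*Δ) := by field_simp; ring
        rw [heq]
        refine le_trans hmin2 ?_
        apply div_le_div_of_nonneg_left (by positivity) (by linarith) (by linarith)
      · rw [hqdef, hqe, hqe2]
        have heq : (2/3)*m*(1/(4*δ)) = m/(6*δ) := by field_simp; ring
        rw [heq]
        exact hmin3
  linarith
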